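/- The only integer solutions (u, v, w) of −w² = u·v·(u² − v²) are those with w = 0, namely (u, v, w) = (a, a, 0), (a, −a, 0), (0, v, 0), or (u, 0, 0). -/

import Mathlib

private lemma natAbs_lt_of_sq_lt {a b : ℤ} (h : a ^ 2 < b ^ 2) : a.natAbs < b.natAbs := by
  have h1 := Int.natAbs_lt_natAbs_of_nonneg_of_lt (sq_nonneg a) h
  rw [Int.natAbs_pow, Int.natAbs_pow] at h1
  exact lt_of_pow_lt_pow_left₀ 2 (Nat.zero_le _) h1

private lemma parity_aux {x y z : ℤ} (hx : Even x) (hy : Odd y) (h : x ^ 4 = y ^ 4 + z ^ 2) :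
    False := by
  obtain ⟨k, hk⟩ := hx
  obtain ⟨l, hl⟩ := hy
  have h8 : ((x : ZMod 8)) ^ 4 = (y : ZMod 8) ^ 4 + (z : ZMod 8) ^ 2 := by
    have := congrArg (fun t : ℤ => (t : ZMod 8)) h
    push_cast at this
    exact this
  have hx8 : (x : ZMod 8) = 2 * (k : ZMod 8) := by rw [hk]; push_cast; ring
  have hy8 : (y : ZMod 8) = 2 * (l : ZMod 8) + 1 := by rw [hl]; push_cast; ring
  have key : ∀ a b c : ZMod 8, a ^ 4 = b ^ 4 + c ^ 2 →
      (a = 1 ∨ a = 3 ∨ a = 5 ∨ a = 7) ∨ (b = 0 ∨ b = 2 ∨ b = 4 ∨ b = 6) := by decide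
  rcases key _ _ _ h8 with h1 | h2
  · rw [hx8] at h1
    exact (by decide : ∀ k : ZMod 8, ¬(2*k = 1 ∨ 2*k = 3 ∨ 2*k = 5 ∨ 2*k = 7)) _ h1
  · rw [hy8] at h2
    exact (by decide : ∀ k : ZMod 8, ¬(2*k+1 = 0 ∨ 2*k+1 = 2 ∨ 2*k+1 = 4 ∨ 2*k+1 = 6)) _ h2

set_option maxHeartbeats 1000000 in
/-- Fermat's right triangle theorem variant: `x^4 = y^4 + z^2` has no solutions
with `y ≠ 0`, `z ≠ 0`. Proved by infinite descent. -/
private lemma descent : ∀ (N : ℕ) (x y z : ℤ), x.natAbs = N → y ≠ 0 → z ≠ 0 →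
    x ^ 4 ≠ y ^ 4 + z ^ 2 := by
  intro N
  induction N using Nat.strong_induction_on with
  | _ N IH =>
  intro x y z hN hy hz heq0
  -- replace x by its absolute value
  set X : ℤ := (x.natAbs : ℤ) with hXdef
  have hX0 : 0 ≤ X := Int.natCast_nonneg _
  have heqX : X ^ 4 = y ^ 4 + z ^ 2 := by
    have : X ^ 4 = x ^ 4 := by
      rw [hXdef, Int.natCast_natAbs, ← abs_pow, abs_of_nonneg (by positivity)]
    rw [this]; exact heq0
  have hXN : X.natAbs = N := by rw [hXdef, Int.natAbs_natCast, hN]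
  clear heq0 hN
  have hXne : X ≠ 0 := by
    intro h0
    rw [h0] at heqX
    have h1 : (0:ℤ) < z ^ 2 := by positivity
    have h2 : (0:ℤ) ≤ y ^ 4 := by positivity
    simp only [zero_pow, ne_eq, OfNat.ofNat_ne_zero, not_false_eq_true] at heqX
    linarith
  have hX1 : 1 ≤ X := lt_of_le_of_ne hX0 (Ne.symm hXne)
  set d : ℕ := Int.gcd X y with hddef
  by_cases hd1 : d = 1
  · -- coprime case
    have hco : IsCoprime X y := Int.isCoprime_iff_gcd_eq_one.mpr hd1
    -- X is odd
    have hXodd : Odd X := by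
      rcases Int.even_or_odd X with hXe | hXo
      · rcases Int.even_or_odd y with hye | hyo
        · exfalso
          obtain ⟨k, hk⟩ := hXe
          obtain ⟨l, hl⟩ := hye
          have h2 : ¬ IsUnit (2 : ℤ) := by decide
          exact h2 (hco.isUnit_of_dvd' ⟨k, by linarith⟩ ⟨l, by linarith⟩)
        · exact absurd heqX (by intro hh; exact parity_aux hXe hyo hh)
      · exact hXo
    have hyz : IsCoprime y z := by
      have h2 : IsCoprime y (X ^ 4 + y * (-(y ^ 3))) :=
        (hco.symm.pow_right).add_mul_left_right _
      have h3 : z * z = X ^ 4 + y * (-(y ^ 3)) := by linear_combination -heqX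
      have h1 : IsCoprime y (z * z) := by rwa [h3]
      exact h1.of_mul_right_left
    have hx2pos : 0 < X ^ 2 := by positivity
    rcases Int.even_or_odd y with hye | hyo
    · -- Case B : y even, z odd
      have hzodd : Odd z := by
        have h1 : Odd (z * z) := by
          have h2 : z * z = X ^ 4 - y ^ 4 := by linear_combination -heqX
          rw [h2]
          obtain ⟨l, hl⟩ := hye
          exact (hXodd.pow).sub_even ⟨8 * l ^ 4, by rw [hl]; ring⟩
        exact (Int.odd_mul.mp h1).1
      have ht : PythagoreanTriple z (y ^ 2) (X ^ 2) := by
        show z * z + y ^ 2 * y ^ 2 = X ^ 2 * X ^ 2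
        linear_combination -heqX
      have hgcd : Int.gcd z (y ^ 2) = 1 :=
        Int.isCoprime_iff_gcd_eq_one.mp (hyz.symm.pow_right)
      obtain ⟨m, n, h1, h2, h3, h4, h5, h6⟩ :=
        ht.coprime_classification' hgcd (Int.odd_iff.mp hzodd) hx2pos
      -- h1 : z = m^2-n^2, h2 : y^2 = 2*m*n, h3 : X^2 = m^2+n^2, h4 : gcd, h5 : parity, h6 : 0 ≤ m
      have hmn : IsCoprime m n := Int.isCoprime_iff_gcd_eq_one.mpr h4
      have hy2pos : 0 < y ^ 2 := by positivity
      have hmnpos : 0 < m * n := by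
        have h7 : 0 < 2 * m * n := by rw [← h2]; exact hy2pos
        linarith
      have hmpos : 0 < m := by
        rcases lt_or_eq_of_le h6 with h | h
        · exact h
        · exfalso; rw [← h] at hmnpos; simp at hmnpos
      have hnpos : 0 < n := by
        rcases mul_pos_iff.mp hmnpos with ⟨_, h'⟩ | ⟨h', _⟩
        · exact h'
        · linarith
      -- key step, shared by the two parity subcases
      have key : ∀ s t : ℤ, Odd s → s ≠ 0 → t ≠ 0 → IsCoprime X (s ^ 2) →
          X ^ 2 = s ^ 4 + 4 * t ^ 4 → False := by
        intro s t hsodd hs0 ht0 hcoXs hkey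
        have ht4 : 0 < t ^ 4 := by positivity
        have hs2 : 0 < s ^ 2 := by positivity
        have hxs : s ^ 2 < X := by
          have e1 : (s ^ 2) * (s ^ 2) = s ^ 4 := by ring
          have e2 : X * X = X ^ 2 := by ring
          have h1 : (s ^ 2) * (s ^ 2) < X * X := by linarith only [e1, e2, hkey, ht4]
          by_contra hcon
          push_neg at hcon
          have h2 : X * X ≤ (s ^ 2) * (s ^ 2) :=
            mul_le_mul hcon hcon (by linarith only [hX1]) (by positivity)
          linarith only [h1, h2]
        obtain ⟨p, hp⟩ : (2:ℤ) ∣ (X - s ^ 2) := by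
          obtain ⟨a, ha⟩ := hXodd
          obtain ⟨b, hb⟩ := hsodd
          exact ⟨a - 2 * b ^ 2 - 2 * b, by rw [ha, hb]; ring⟩
        set q : ℤ := p + s ^ 2 with hqdef
        have hpq : p * q = t ^ 4 := by
          have h4' : (4:ℤ) * (p * q) = 4 * t ^ 4 := by
            rw [hqdef]; linear_combination hkey - (X + s ^ 2 + 2 * p) * hp
          exact mul_left_cancel₀ (by norm_num : (4:ℤ) ≠ 0) h4'
        have hqpos : 0 < q := by rw [hqdef]; linarith only [hp, hxs, hs2]
        have hppos : 0 < p := by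
          have h1 : 0 < p * q := by rw [hpq]; positivity
          rcases mul_pos_iff.mp h1 with ⟨h2, _⟩ | ⟨_, h3⟩
          · exact h2
          · linarith only [h3, hqpos]
        have hcopq : IsCoprime p q := by
          obtain ⟨A, B, hAB⟩ := hcoXs
          exact ⟨A - B, A + B, by rw [hqdef]; linear_combination hAB - A * (by linarith only [hp] : X = 2 * p + s ^ 2)⟩
        obtain ⟨r, hr⟩ := Int.sq_of_isCoprime hcopq (show p * q = (t ^ 2) ^ 2 by rw [hpq]; ring)
        have hrp : p = r ^ 2 := by
          rcases hr with h | h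
          · exact h
          · exfalso; linarith only [h, hppos, sq_nonneg r]
        obtain ⟨e, he⟩ := Int.sq_of_isCoprime hcopq.symm
          (by rw [mul_comm, hpq]; ring : q * p = (t ^ 2) ^ 2)
        have hqe : q = e ^ 2 := by
          rcases he with h | h
          · exact h
          · exfalso; linarith only [h, hqpos, sq_nonneg e]
        have hre : IsCoprime r e := by
          have h1 : IsCoprime (r * r) (e * e) := by
            rw [← sq, ← sq, ← hrp, ← hqe]; exact hcopq
          exact (h1.of_mul_left_left).of_mul_right_left
        have hre2 : (r * e) ^ 2 = (t ^ 2) ^ 2 := by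
          rw [mul_pow, ← hrp, ← hqe, hpq]; ring
        have hfg : ∃ f g : ℤ, p = f ^ 4 ∧ q = g ^ 4 := by
          rcases eq_or_eq_neg_of_sq_eq_sq _ _ hre2 with h | h
          · obtain ⟨f, hf⟩ := Int.sq_of_isCoprime hre h
            obtain ⟨g, hg⟩ := Int.sq_of_isCoprime hre.symm (by rw [mul_comm]; exact h)
            refine ⟨f, g, ?_, ?_⟩
            · rcases hf with h' | h' <;> rw [hrp, h'] <;> ring
            · rcases hg with h' | h' <;> rw [hqe, h'] <;> ring
          · have h' : r * (-e) = t ^ 2 := by linear_combination -h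
            obtain ⟨f, hf⟩ := Int.sq_of_isCoprime hre.neg_right h'
            obtain ⟨g, hg⟩ := Int.sq_of_isCoprime hre.neg_right.symm
              (by rw [mul_comm]; exact h')
            refine ⟨f, g, ?_, ?_⟩
            · rcases hf with h'' | h'' <;> rw [hrp, h''] <;> ring
            · rcases hg with h'' | h'' <;>
                · have : e = -(-e) := by ring
                  rw [hqe, this, h'']; ring
        obtain ⟨f, g, hpf, hqg⟩ := hfg
        have hf0 : f ≠ 0 := by
          intro h0
          rw [h0] at hpf
          norm_num at hpf
          rw [hpf] at hppos
          exact absurd hppos (by norm_num)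
        have heqfin : g ^ 4 = f ^ 4 + s ^ 2 := by
          linear_combination hpf - hqg + hqdef
        have hf1 : 1 ≤ f ^ 4 := by
          have := hppos; rw [hpf] at this; omega
        have hg4 : g ^ 4 < X ^ 2 := by
          have hp1 : 1 ≤ p := hppos
          have hq1 : q ≤ q * p := le_mul_of_one_le_right (le_of_lt hqpos) hp1
          have hq2 : q ≤ t ^ 4 := by rw [← hpq, mul_comm]; exact hq1
          have hs4 : 1 ≤ s ^ 4 := by
            have h9 : 0 < s ^ 4 := by positivity
            linarith
          linarith only [hqg ▸ hq2, hkey, ht4, hs4]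
        have hglt : g.natAbs < N := by
          rw [← hXN]
          have hX2 : 1 ≤ X ^ 2 := hx2pos
          have hX24 : X ^ 2 * 1 ≤ X ^ 2 * X ^ 2 :=
            mul_le_mul_of_nonneg_left hX2 (by positivity)
          have e1 : (g ^ 2) ^ 2 = g ^ 4 := by ring
          have e2 : (X ^ 2) ^ 2 = X ^ 2 * X ^ 2 := by ring
          have h1 : (g ^ 2) ^ 2 < (X ^ 2) ^ 2 := by linarith only [e1, e2, hg4, hX24]
          have h2 := natAbs_lt_of_sq_lt h1
          rw [Int.natAbs_pow, Int.natAbs_pow] at h2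
          exact lt_of_pow_lt_pow_left₀ 2 (Nat.zero_le _) h2
        exact IH g.natAbs hglt g f s rfl hf0 hs0 heqfin
      -- derive (s, t) from the parity subcases
      obtain ⟨y', hy'⟩ := hye
      have hy'' : y = 2 * y' := by linarith
      rcases h5 with ⟨hm2, hn2⟩ | ⟨hm2, hn2⟩
      · -- m even, n odd
        obtain ⟨m', hm'⟩ : (2:ℤ) ∣ m := Int.dvd_of_emod_eq_zero hm2
        have hy'2 : m' * n = y' ^ 2 := by
          have h4' : (4:ℤ) * (m' * n) = 4 * y' ^ 2 := by
            linear_combination -h2 - 2 * n * hm' + (y + 2 * y') * hy''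
          exact mul_left_cancel₀ (by norm_num : (4:ℤ) ≠ 0) h4'
        have hcom'n : IsCoprime m' n := by
          have := hmn; rw [hm'] at this; exact this.of_mul_left_right
        obtain ⟨a, ha⟩ := Int.sq_of_isCoprime hcom'n hy'2
        have hm'pos : 0 < m' := by omega
        have ham : m' = a ^ 2 := by
          rcases ha with h | h
          · exact h
          · exfalso; linarith only [h, hm'pos, sq_nonneg a]
        obtain ⟨b, hb⟩ := Int.sq_of_isCoprime hcom'n.symm (by rw [mul_comm]; exact hy'2)
        have hbn : n = b ^ 2 := by
          rcases hb with h | h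
          · exact h
          · exfalso; linarith only [h, hnpos, sq_nonneg b]
        have hbodd : Odd b := by
          have h1 : Odd n := Int.odd_iff.mpr hn2
          rw [hbn] at h1
          rcases Int.even_or_odd b with h | h
          · exfalso
            obtain ⟨c, hc⟩ := h
            exact (Int.not_odd_iff_even.mpr ⟨2 * c ^ 2, by rw [hc]; ring⟩) h1
          · exact h
        have hb0 : b ≠ 0 := by intro h0; rw [h0] at hbn; simp at hbn; omega
        have ha0 : a ≠ 0 := by intro h0; rw [h0] at ham; simp at ham; omega
        have hcoXn : IsCoprime X (b ^ 2) := by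
          rw [← hbn]
          have h1 : IsCoprime n (m ^ 2 + n * n) :=
            (hmn.symm.pow_right).add_mul_left_right _
          have h2' : X * X = m ^ 2 + n * n := by linear_combination h3
          have h3' : IsCoprime n (X * X) := by rwa [h2']
          exact (h3'.symm.of_mul_left_left)
        have hm'' : m = 2 * a ^ 2 := by rw [hm', ham]
        exact key b a hbodd hb0 ha0 hcoXn
          (by linear_combination h3 + (m + 2 * a ^ 2) * hm'' + (n + b ^ 2) * hbn)
      · -- m odd, n even
        obtain ⟨n', hn'⟩ : (2:ℤ) ∣ n := Int.dvd_of_emod_eq_zero hn2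
        have hy'2 : m * n' = y' ^ 2 := by
          have h4' : (4:ℤ) * (m * n') = 4 * y' ^ 2 := by
            linear_combination -h2 - 2 * m * hn' + (y + 2 * y') * hy''
          exact mul_left_cancel₀ (by norm_num : (4:ℤ) ≠ 0) h4'
        have hcomn' : IsCoprime m n' := by
          have := hmn; rw [hn'] at this; exact this.of_mul_right_right
        obtain ⟨a, ha⟩ := Int.sq_of_isCoprime hcomn' hy'2
        have ham : m = a ^ 2 := by
          rcases ha with h | h
          · exact h
          · exfalso; linarith only [h, hmpos, sq_nonneg a]
        have hn'pos : 0 < n' := by omega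
        obtain ⟨b, hb⟩ := Int.sq_of_isCoprime hcomn'.symm (by rw [mul_comm]; exact hy'2)
        have hbn : n' = b ^ 2 := by
          rcases hb with h | h
          · exact h
          · exfalso; linarith only [h, hn'pos, sq_nonneg b]
        have haodd : Odd a := by
          have h1 : Odd m := Int.odd_iff.mpr hm2
          rw [ham] at h1
          rcases Int.even_or_odd a with h | h
          · exfalso
            obtain ⟨c, hc⟩ := h
            exact (Int.not_odd_iff_even.mpr ⟨2 * c ^ 2, by rw [hc]; ring⟩) h1
          · exact h
        have ha0 : a ≠ 0 := by intro h0; rw [h0] at ham; simp at ham; omega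
        have hb0 : b ≠ 0 := by intro h0; rw [h0] at hbn; simp at hbn; omega
        have hcoXm : IsCoprime X (a ^ 2) := by
          rw [← ham]
          have h1 : IsCoprime m (n ^ 2 + m * m) :=
            (hmn.pow_right).add_mul_left_right _
          have h2' : X * X = n ^ 2 + m * m := by linear_combination h3
          have h3' : IsCoprime m (X * X) := by rwa [h2']
          exact (h3'.symm.of_mul_left_left)
        have hn'' : n = 2 * b ^ 2 := by rw [hn', hbn]
        exact key a b haodd ha0 hb0 hcoXm
          (by linear_combination h3 + (m + a ^ 2) * ham + (n + 2 * b ^ 2) * hn'')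
    · -- Case A : y odd
      have ht : PythagoreanTriple (y ^ 2) z (X ^ 2) := by
        show y ^ 2 * y ^ 2 + z * z = X ^ 2 * X ^ 2
        linear_combination -heqX
      have hgcd : Int.gcd (y ^ 2) z = 1 := Int.isCoprime_iff_gcd_eq_one.mp (hyz.pow_left)
      have hy2odd : y ^ 2 % 2 = 1 := Int.odd_iff.mp (hyo.pow)
      obtain ⟨m, n, h1, h2, h3, h4, h5, h6⟩ := ht.coprime_classification' hgcd hy2odd hx2pos
      have hn : n ≠ 0 := by
        rintro rfl
        rw [mul_zero] at h2
        exact hz h2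
      have heq2 : m ^ 4 = n ^ 4 + (X * y) ^ 2 := by
        linear_combination (-(m ^ 2 + n ^ 2)) * h1 - y ^ 2 * h3
      have hxy : X * y ≠ 0 := mul_ne_zero hXne hy
      have hlt : m.natAbs < N := by
        rw [← hXN]
        apply natAbs_lt_of_sq_lt
        have hn2 : 0 < n ^ 2 := by positivity
        linarith only [h3, hn2]
      exact IH m.natAbs hlt m n (X * y) rfl hn hxy heq2
  · -- non-coprime case: descend by the gcd
    have hd0 : d ≠ 0 := by
      rw [hddef]
      intro h0
      exact hXne ((Int.gcd_eq_zero_iff.mp h0).1)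
    have hd2 : 2 ≤ d := by omega
    obtain ⟨x1, hx1⟩ : (d:ℤ) ∣ X := Int.gcd_dvd_left _ _
    obtain ⟨y1, hy1⟩ : (d:ℤ) ∣ y := Int.gcd_dvd_right _ _
    have hdz : ((d:ℤ) ^ 2) ^ 2 ∣ z ^ 2 := by
      refine ⟨x1 ^ 4 - y1 ^ 4, ?_⟩
      rw [hx1, hy1] at heqX
      linear_combination -heqX
    have hdz' : (d:ℤ) ^ 2 ∣ z := (Int.pow_dvd_pow_iff (two_ne_zero)).mp hdz
    obtain ⟨z1, hz1⟩ := hdz'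
    have heq1 : x1 ^ 4 = y1 ^ 4 + z1 ^ 2 := by
      have hd4 : ((d:ℤ)) ^ 4 ≠ 0 := by positivity
      apply mul_left_cancel₀ hd4
      rw [hx1, hy1, hz1] at heqX
      linear_combination heqX
    have hy1ne : y1 ≠ 0 := by rintro rfl; rw [mul_zero] at hy1; exact hy hy1
    have hz1ne : z1 ≠ 0 := by rintro rfl; rw [mul_zero] at hz1; exact hz hz1
    have hx1ne : x1 ≠ 0 := by rintro rfl; rw [mul_zero] at hx1; exact hXne hx1
    have hlt : x1.natAbs < N := by
      rw [← hXN, hx1, Int.natAbs_mul, Int.natAbs_natCast]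
      have h1 : x1.natAbs ≠ 0 := fun h => hx1ne (Int.natAbs_eq_zero.mp h)
      calc x1.natAbs < 2 * x1.natAbs := by omega
        _ ≤ d * x1.natAbs := Nat.mul_le_mul_right _ hd2
    exact IH x1.natAbs hlt x1 y1 z1 rfl hy1ne hz1ne heq1

private lemma no_sol_coprime (u v w : ℤ) (hco : IsCoprime u v) (hw : w ≠ 0)
    (h : w ^ 2 = u * v * (v ^ 2 - u ^ 2)) : False := by
  have hu : u ≠ 0 := by
    rintro rfl
    rw [zero_mul, zero_mul] at h
    exact hw (pow_eq_zero_iff two_ne_zero |>.mp h)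
  have hv : v ≠ 0 := by
    rintro rfl
    rw [mul_zero, zero_mul] at h
    exact hw (pow_eq_zero_iff two_ne_zero |>.mp h)
  have hvu : v ^ 2 - u ^ 2 ≠ 0 := by
    intro h0
    rw [h0, mul_zero] at h
    exact hw (pow_eq_zero_iff two_ne_zero |>.mp h)
  have hA : IsCoprime u (v ^ 2 - u ^ 2) := by
    have h1 : IsCoprime u (v ^ 2 + u * (-u)) := (hco.pow_right).add_mul_left_right _
    have h2 : v ^ 2 - u ^ 2 = v ^ 2 + u * (-u) := by ring
    rwa [h2]
  have hB : IsCoprime v (v ^ 2 - u ^ 2) := by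
    have h1 : IsCoprime v (-(u ^ 2) + v * v) :=
      ((hco.symm.pow_right).neg_right).add_mul_left_right _
    have h2 : v ^ 2 - u ^ 2 = -(u ^ 2) + v * v := by ring
    rwa [h2]
  have hco2 : IsCoprime (u * v) (v ^ 2 - u ^ 2) := hA.mul_left hB
  obtain ⟨r, hr⟩ := Int.sq_of_isCoprime hco2
    (show (u * v) * (v ^ 2 - u ^ 2) = w ^ 2 by linear_combination -h)
  obtain ⟨s, hs⟩ := Int.sq_of_isCoprime hco2.symm
    (show (v ^ 2 - u ^ 2) * (u * v) = w ^ 2 by linear_combination -h)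
  have hs0 : s ≠ 0 := by
    rintro rfl
    rcases hs with h' | h' <;> simp at h' <;> exact hvu h'
  have hEa : ∃ a : ℤ, u ^ 2 = a ^ 4 := by
    rcases hr with h' | h'
    · obtain ⟨a, ha⟩ := Int.sq_of_isCoprime hco h'
      exact ⟨a, by rcases ha with h'' | h'' <;> rw [h''] <;> ring⟩
    · obtain ⟨a, ha⟩ := Int.sq_of_isCoprime hco.neg_right
        (show u * (-v) = r ^ 2 by linear_combination -h')
      exact ⟨a, by rcases ha with h'' | h'' <;> rw [h''] <;> ring⟩
  have hEb : ∃ b : ℤ, v ^ 2 = b ^ 4 := by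
    rcases hr with h' | h'
    · obtain ⟨b, hb⟩ := Int.sq_of_isCoprime hco.symm
        (show v * u = r ^ 2 by linear_combination h')
      exact ⟨b, by rcases hb with h'' | h'' <;> rw [h''] <;> ring⟩
    · obtain ⟨b, hb⟩ := Int.sq_of_isCoprime hco.symm.neg_right
        (show v * (-u) = r ^ 2 by linear_combination -h')
      exact ⟨b, by rcases hb with h'' | h'' <;> rw [h''] <;> ring⟩
  obtain ⟨a, ha⟩ := hEa
  obtain ⟨b, hb⟩ := hEb
  have ha0 : a ≠ 0 := by
    rintro rfl
    simp at ha
    exact hu ha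
  have hb0 : b ≠ 0 := by
    rintro rfl
    simp at hb
    exact hv hb
  rcases hs with h' | h'
  · exact descent b.natAbs b a s rfl ha0 hs0 (by linear_combination h' - hb + ha)
  · exact descent a.natAbs a b s rfl hb0 hs0 (by linear_combination -h' - ha + hb)

private lemma no_sol (u v w : ℤ) (hw : w ≠ 0) (h : w ^ 2 = u * v * (v ^ 2 - u ^ 2)) : False := by
  have hu : u ≠ 0 := by
    rintro rfl
    rw [zero_mul, zero_mul] at h
    exact hw (pow_eq_zero_iff two_ne_zero |>.mp h)
  set d : ℕ := Int.gcd u v with hddef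
  have hd0 : d ≠ 0 := fun h0 => hu ((Int.gcd_eq_zero_iff.mp h0).1)
  have hdz : ((d:ℤ)) ≠ 0 := by exact_mod_cast hd0
  obtain ⟨u1, hu1⟩ : (d:ℤ) ∣ u := Int.gcd_dvd_left _ _
  obtain ⟨v1, hv1⟩ : (d:ℤ) ∣ v := Int.gcd_dvd_right _ _
  have hco : IsCoprime u1 v1 := by
    apply Int.isCoprime_iff_gcd_eq_one.mpr
    have hu1' : u1 = u / (d:ℤ) := by rw [hu1, Int.mul_ediv_cancel_left _ hdz]
    have hv1' : v1 = v / (d:ℤ) := by rw [hv1, Int.mul_ediv_cancel_left _ hdz]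
    rw [hu1', hv1', hddef]
    exact Int.gcd_div_gcd_div_gcd (Nat.pos_of_ne_zero hd0)
  have hdvd : ((d:ℤ) ^ 2) ^ 2 ∣ w ^ 2 := by
    refine ⟨u1 * v1 * (v1 ^ 2 - u1 ^ 2), ?_⟩
    rw [hu1, hv1] at h
    linear_combination h
  obtain ⟨w1, hw1⟩ := (Int.pow_dvd_pow_iff two_ne_zero).mp hdvd
  have hw1ne : w1 ≠ 0 := by rintro rfl; rw [mul_zero] at hw1; exact hw hw1
  have heq1 : w1 ^ 2 = u1 * v1 * (v1 ^ 2 - u1 ^ 2) := by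
    have hd4 : ((d:ℤ) ^ 2) ^ 2 ≠ 0 := by positivity
    apply mul_left_cancel₀ hd4
    rw [hu1, hv1, hw1] at h
    linear_combination h
  exact no_sol_coprime u1 v1 w1 hco hw1ne heq1

theorem stmt_6 (u v w : ℤ) (h : -w^2 = u * v * (u^2 - v^2)) :
    w = 0 ∧ (v = u ∨ v = -u ∨ u = 0 ∨ v = 0) := by
  have h' : w ^ 2 = u * v * (v ^ 2 - u ^ 2) := by linear_combination -h
  by_cases hw : w = 0
  · subst hw
    refine ⟨rfl, ?_⟩
    have h0 : u * v * (v ^ 2 - u ^ 2) = 0 := by linear_combination -h'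
    rcases mul_eq_zero.mp h0 with h1 | h1
    · rcases mul_eq_zero.mp h1 with h2 | h2
      · exact Or.inr (Or.inr (Or.inl h2))
      · exact Or.inr (Or.inr (Or.inr h2))
    · have h2 : (v - u) * (v + u) = 0 := by linear_combination h1
      rcases mul_eq_zero.mp h2 with h3 | h3
      · exact Or.inl (by linarith)
      · exact Or.inr (Or.inl (by linarith))
  · exact absurd h' fun hh => (no_sol u v w hw hh).elim
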